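/- Let p be a prime, k ≥ 1, and let G = G_1 × ⋯ × G_s be a product of cyclic groups where G_i has order p^{k_i} with k_i ≥ k and a fixed generator τ_i. Let R be a commutative ring and θ = Σ_{g∈G} a_g·g an element of the group ring R[G]. Set D_i = Σ_{j=1}^{p^{k_i}−1} j·τ_i^j, D = D_1⋯D_s, and N = Σ_{g∈G} g in R[G]. Suppose that D·θ is invariant under the translation action of G modulo p^k, i.e. h·(D·θ) ≡ D·θ (mod p^k R[G]) for every h ∈ G. Then D·θ ≡ (−1)^s · (Σ_{g∈G} a_g · Π_{i=1}^{s} j_i(g)) · N (mod p^k R[G]), where for each g ∈ G the integers j_i(g) ∈ {0,…,p^{k_i}−1} are determined by g = (τ_1^{j_1(g)}, …, τ_s^{j_s(g)}). -/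

import Mathlib

/-- Sakamoto's formula for the Kolyvagin derivative of a Galois-invariant
element.  Let `p` be a prime, `k ≥ 1`, and `G = G_1 × ⋯ × G_s` a product of cyclic groups where
`G_i` has order `p^{κ i} (κ i ≥ k)` and fixed generator `τ i`.  For `θ = Σ_g a_g·g ∈ R[G]`, with
`D_i = Σ_{j=1}^{p^{κ i}−1} j·τ_i^j`, `D = D_1⋯D_s` and `N = Σ_g g`, if `D·θ` is invariant under
translation by `G` modulo `p^k R[G]`, then
`D·θ ≡ (−1)^s·(Σ_g a_g·Π_i j_i(g))·N (mod p^k R[G])`, where `g = Π_i τ_i^{j_i(g)}` with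
`0 ≤ j_i(g) < p^{κ i}`. -/
theorem stmt3 (p : ℕ) (hp : p.Prime) (k : ℕ) (hk : 1 ≤ k) (s : ℕ)
    (κ : Fin s → ℕ) (hκ : ∀ i, k ≤ κ i)
    (G : Fin s → Type*) [∀ i, CommGroup (G i)] [∀ i, Fintype (G i)]
    (τ : ∀ i, G i) (hcard : ∀ i, Fintype.card (G i) = p ^ κ i)
    (hgen : ∀ i, ∀ x : G i, x ∈ Subgroup.zpowers (τ i))
    (R : Type*) [CommRing R]
    (θ : MonoidAlgebra R (∀ i, G i))
    (j : (∀ i, G i) → ∀ i : Fin s, ℕ)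
    (hj : ∀ g i, g i = τ i ^ (j g i) ∧ j g i < p ^ κ i)
    (D N : MonoidAlgebra R (∀ i, G i))
    (hD : D = ∏ i : Fin s, ∑ jj ∈ Finset.Icc 1 (p ^ κ i - 1),
        MonoidAlgebra.single (Pi.mulSingle i (τ i ^ jj)) (jj : R))
    (hN : N = ∑ g : ∀ i, G i, MonoidAlgebra.single g (1 : R))
    (hinv : ∀ h : ∀ i, G i, ∃ c : MonoidAlgebra R (∀ i, G i),
        MonoidAlgebra.single h 1 * (D * θ) - D * θ = ((p : R) ^ k) • c) :
    ∃ c : MonoidAlgebra R (∀ i, G i),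
      D * θ - ((-1 : R) ^ s * ∑ g : ∀ i, G i, θ.coeff g * ∏ i, (j g i : R)) • N
        = ((p : R) ^ k) • c := by
  classical
  have hppos : 0 < p := hp.pos
  have hnpos : ∀ i : Fin s, 0 < p ^ κ i := fun i => pow_pos hppos _
  -- order of τ i
  have hord : ∀ i, orderOf (τ i) = p ^ κ i := fun i => by
    rw [orderOf_eq_card_of_forall_mem_zpowers (hgen i), Nat.card_eq_fintype_card, hcard i]
  -- uniqueness of exponents
  have hexp : ∀ i (a b : ℕ), a < p ^ κ i → b < p ^ κ i → τ i ^ a = τ i ^ b → a = b := by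
    intro i a b ha hb hab
    have := (pow_eq_pow_iff_modEq).1 hab
    rwa [hord i, Nat.ModEq, Nat.mod_eq_of_lt ha, Nat.mod_eq_of_lt hb] at this
  -- every group element is τ ^ (j g)
  have hge : ∀ g : ∀ i, G i, g = fun i => τ i ^ j g i := by
    intro g; funext i; exact (hj g i).1
  -- coefficients of D
  have hDcoe : ∀ h : ∀ i, G i, D.coeff h = ∏ i, (j h i : R) := by
    intro h
    rw [hD, Finset.prod_univ_sum]
    have hcollapse : ∀ m : ∀ i : Fin s, ℕ,
        (∏ i, MonoidAlgebra.single (Pi.mulSingle i (τ i ^ m i)) ((m i : R)))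
          = MonoidAlgebra.single (fun i => τ i ^ m i) (∏ i, (m i : R)) := by
      intro m
      rw [MonoidAlgebra.prod_single]
      congr 1
      exact Finset.univ_prod_mulSingle (fun i => τ i ^ m i)
    simp only [hcollapse]
    rw [MonoidAlgebra.coeff_sum, Finset.sum_apply']
    have hcond : ∀ m ∈ Fintype.piFinset (fun i => Finset.Icc 1 (p ^ κ i - 1)),
        ((fun i => τ i ^ m i) = h) ↔ m = j h := by
      intro m hm
      constructor
      · intro hmh
        funext i
        have hmi : m i ∈ Finset.Icc 1 (p ^ κ i - 1) := Fintype.mem_piFinset.1 hm i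
        have hmi' : m i < p ^ κ i :=
          lt_of_le_of_lt (Finset.mem_Icc.1 hmi).2 (Nat.sub_lt (hnpos i) one_pos)
        refine hexp i _ _ hmi' (hj h i).2 ?_
        have : τ i ^ m i = h i := congrFun hmh i
        rw [this, (hj h i).1]
      · rintro rfl
        exact (hge h).symm
    calc (∑ m ∈ Fintype.piFinset (fun i => Finset.Icc 1 (p ^ κ i - 1)),
            (MonoidAlgebra.single (fun i => τ i ^ m i) (∏ i, (m i : R))).coeff h)
        = ∑ m ∈ Fintype.piFinset (fun i => Finset.Icc 1 (p ^ κ i - 1)),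
            if m = j h then (∏ i, (m i : R)) else 0 := by
          refine Finset.sum_congr rfl fun m hm => ?_
          rw [MonoidAlgebra.single_apply]
          by_cases hc : (fun i => τ i ^ m i) = h
          · rw [if_pos hc, if_pos ((hcond m hm).1 hc)]
          · rw [if_neg hc, if_neg (fun he => hc ((hcond m hm).2 he))]
      _ = if j h ∈ Fintype.piFinset (fun i => Finset.Icc 1 (p ^ κ i - 1)) then
            (∏ i, (j h i : R)) else 0 := Finset.sum_ite_eq' _ _ _
      _ = ∏ i, (j h i : R) := by
          by_cases hmem : j h ∈ Fintype.piFinset (fun i => Finset.Icc 1 (p ^ κ i - 1))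
          · rw [if_pos hmem]
          · rw [if_neg hmem]
            have : ∃ i, j h i = 0 := by
              by_contra hall
              push_neg at hall
              exact hmem (Fintype.mem_piFinset.2 fun i => Finset.mem_Icc.2
                ⟨Nat.one_le_iff_ne_zero.2 (hall i), Nat.le_sub_one_of_lt (hj h i).2⟩)
            obtain ⟨i0, hi0⟩ := this
            rw [eq_comm, Finset.prod_eq_zero (Finset.mem_univ i0)]
            rw [hi0]; exact Nat.cast_zero
  -- N has all coefficients 1
  have hNcoe : ∀ x : ∀ i, G i, N.coeff x = 1 := by
    intro x
    rw [hN, MonoidAlgebra.coeff_sum, Finset.sum_apply']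
    simp only [MonoidAlgebra.single_apply]
    rw [Finset.sum_ite_eq', if_pos (Finset.mem_univ x)]
  -- coefficient of D*θ at 1
  have hc0 : (D * θ).coeff 1 = ∑ g : ∀ i, G i, (∏ i, (j g⁻¹ i : R)) * θ.coeff g := by
    have hθ : θ = ∑ g : ∀ i, G i, MonoidAlgebra.single g (θ.coeff g) := by
      ext x
      rw [MonoidAlgebra.coeff_sum, Finset.sum_apply']
      simp only [MonoidAlgebra.single_apply]
      rw [Finset.sum_ite_eq', if_pos (Finset.mem_univ x)]
    conv_lhs => rw [hθ]
    rw [Finset.mul_sum, MonoidAlgebra.coeff_sum, Finset.sum_apply']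
    refine Finset.sum_congr rfl fun g _ => ?_
    rw [MonoidAlgebra.mul_single_apply, one_mul, hDcoe]
  -- per-element congruence in ℤ between j(g⁻¹) and -j(g)
  have hkey : ∀ g : ∀ i, G i, ∃ e : R,
      (∏ i, (j g⁻¹ i : R)) - (-1 : R) ^ s * ∏ i, (j g i : R) = (p : R) ^ k * e := by
    intro g
    haveI : NeZero (p ^ k) := ⟨(pow_pos hppos k).ne'⟩
    have hdvd : ∀ i, (p : ℤ) ^ k ∣ (j g⁻¹ i : ℤ) + (j g i : ℤ) := by
      intro i
      have h1 : τ i ^ (j g⁻¹ i + j g i) = 1 := by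
        rw [pow_add, ← (hj g⁻¹ i).1, ← (hj g i).1, Pi.inv_apply, inv_mul_cancel]
      have h2 : p ^ κ i ∣ j g⁻¹ i + j g i := by
        rw [← hord i]; exact orderOf_dvd_of_pow_eq_one h1
      have h3 : p ^ k ∣ j g⁻¹ i + j g i := dvd_trans (pow_dvd_pow p (hκ i)) h2
      exact_mod_cast Int.natCast_dvd_natCast.2 h3
    have hz : (p : ℤ) ^ k ∣ (∏ i, (j g⁻¹ i : ℤ)) - (-1 : ℤ) ^ s * ∏ i, (j g i : ℤ) := by
      have : ((((∏ i, (j g⁻¹ i : ℤ)) - (-1 : ℤ) ^ s * ∏ i, (j g i : ℤ)) : ℤ) :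
          ZMod (p ^ k)) = 0 := by
        push_cast
        have heach : ∀ i, ((j g⁻¹ i : ZMod (p ^ k))) = -(j g i : ZMod (p ^ k)) := by
          intro i
          have : ((j g⁻¹ i + j g i : ℕ) : ZMod (p ^ k)) = 0 := by
            rw [ZMod.natCast_eq_zero_iff]
            have := hdvd i
            exact_mod_cast this
          push_cast at this
          linear_combination this
        rw [Finset.prod_congr rfl (fun i _ => heach i)]
        rw [show (fun i => -(j g i : ZMod (p ^ k))) = fun i => (-1) * (j g i : ZMod (p ^ k))
          by funext i; ring]
        rw [Finset.prod_mul_distrib, Finset.prod_const, Finset.card_univ, Fintype.card_fin]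
        ring
      rwa [ZMod.intCast_zmod_eq_zero_iff_dvd, Nat.cast_pow] at this
    obtain ⟨z, hzz⟩ := hz
    refine ⟨(z : R), ?_⟩
    have := congrArg (fun t : ℤ => (t : R)) hzz
    push_cast at this
    convert this using 2
  choose e he using hkey
  -- the difference of the constant and the target scalar
  have hsum : (D * θ).coeff 1 - ((-1 : R) ^ s * ∑ g : ∀ i, G i, θ.coeff g * ∏ i, (j g i : R))
      = (p : R) ^ k * ∑ g : ∀ i, G i, θ.coeff g * e g := by
    rw [hc0, Finset.mul_sum, ← Finset.sum_sub_distrib, Finset.mul_sum]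
    refine Finset.sum_congr rfl fun g _ => ?_
    have := he g
    calc (∏ i, (j g⁻¹ i : R)) * θ.coeff g - (-1 : R) ^ s * (θ.coeff g * ∏ i, (j g i : R))
        = θ.coeff g * ((∏ i, (j g⁻¹ i : R)) - (-1 : R) ^ s * ∏ i, (j g i : R)) := by ring
      _ = θ.coeff g * ((p : R) ^ k * e g) := by rw [this]
      _ = (p : R) ^ k * (θ.coeff g * e g) := by ring
  -- invariance gives all coefficients congruent to the one at 1
  choose cf hcf using hinv
  have hcoeff : ∀ h : ∀ i, G i, (D * θ).coeff h = (D * θ).coeff 1 - (p : R) ^ k * (cf h).coeff h := by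
    intro h
    have h1 : ((MonoidAlgebra.single h 1 * (D * θ) - D * θ : MonoidAlgebra R (∀ i, G i))).coeff h
        = (((p : R) ^ k) • cf h).coeff h := by rw [hcf h]
    have h2 : ((MonoidAlgebra.single h 1 * (D * θ) - D * θ : MonoidAlgebra R (∀ i, G i))).coeff h
        = (D * θ).coeff 1 - (D * θ).coeff h := by
      rw [show ∀ a b : MonoidAlgebra R (∀ i, G i), (a - b).coeff h = a.coeff h - b.coeff h from fun a b => rfl,
        MonoidAlgebra.single_mul_apply, one_mul, inv_mul_cancel]
    have h3 : (((p : R) ^ k) • cf h).coeff h = (p : R) ^ k * (cf h).coeff h := rfl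
    rw [h2, h3] at h1
    linear_combination -h1
  -- assemble the final witness
  refine ⟨∑ x : ∀ i, G i,
      MonoidAlgebra.single x ((∑ g : ∀ i, G i, θ.coeff g * e g) - (cf x).coeff x), ?_⟩
  refine MonoidAlgebra.ext (Finsupp.ext fun x => ?_)
  rw [show ∀ (a b : MonoidAlgebra R (∀ i, G i)) (x : ∀ i, G i), (a - b).coeff x = a.coeff x - b.coeff x
    from fun a b x => rfl]
  rw [show ∀ (r : R) (a : MonoidAlgebra R (∀ i, G i)) (x : ∀ i, G i), (r • a).coeff x = r * a.coeff x
    from fun r a x => rfl]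
  rw [show ∀ (r : R) (a : MonoidAlgebra R (∀ i, G i)) (x : ∀ i, G i), (r • a).coeff x = r * a.coeff x
    from fun r a x => rfl]
  rw [hcoeff x, hNcoe x, mul_one, MonoidAlgebra.coeff_sum, Finset.sum_apply']
  simp only [MonoidAlgebra.single_apply]
  rw [Finset.sum_ite_eq', if_pos (Finset.mem_univ x)]
  linear_combination hsum
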